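/- Let N ≥ 4 be even and α ∈ (0, π/2). Define p_{N,α} = (w_{N-2}/w_{N-1}) ∫₀^α sin^{N-2} θ dθ with w_n = 2π^{(n+1)/2}/Γ((n+1)/2). Then p_{N,α} ≥ ((N-2)!!/(π·N·(N-3)!!))·cos α·sin^{N} α. -/

import Mathlib

open Real Finset

/-- Surface area of the unit sphere `S^n ⊂ ℝ^{n+1}`. -/
noncomputable def sphereArea (n : ℕ) : ℝ :=
  2 * Real.pi ^ (((n : ℝ) + 1) / 2) / Real.Gamma (((n : ℝ) + 1) / 2)

/-- Relative surface area of the spherical cap of colatitude `α` on `S^{N-1} ⊂ ℝ^N`. -/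
noncomputable def capProb (N : ℕ) (α : ℝ) : ℝ :=
  sphereArea (N - 2) / sphereArea (N - 1) * ∫ θ in (0:ℝ)..α, Real.sin θ ^ (N - 2)

lemma gamma_half (k : ℕ) :
    Real.Gamma ((k : ℝ) + 1/2) =
      (Nat.doubleFactorial (2*k - 1) : ℝ) * Real.sqrt π / 2 ^ k := by
  induction k with
  | zero => simpa using Real.Gamma_one_half_eq
  | succ k ih =>
      have h : ((k+1 : ℕ) : ℝ) + 1/2 = ((k:ℝ) + 1/2) + 1 := by push_cast; ring
      rw [h, Real.Gamma_add_one (by positivity), ih]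
      have h2 : 2*(k+1) - 1 = 2*k + 1 := by omega
      rw [h2, Nat.doubleFactorial_add_one]
      push_cast
      field_simp
      ring

lemma ratio_eq (m : ℕ) (hm : 2 ≤ m) :
    sphereArea (2*m - 2) / sphereArea (2*m - 1) =
      (Nat.doubleFactorial (2*m - 2) : ℝ) / (π * (Nat.doubleFactorial (2*m - 3))) := by
  have hπ := Real.pi_pos
  have hsq : Real.sqrt π * Real.sqrt π = π := Real.mul_self_sqrt hπ.le
  have hsqpos : 0 < Real.sqrt π := Real.sqrt_pos.mpr hπ
  -- arguments
  have e1 : (((2*m - 2 : ℕ) : ℝ) + 1) / 2 = ((m - 1 : ℕ) : ℝ) + 1/2 := by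
    have : (2*m - 2 : ℕ) = 2*(m-1) := by omega
    rw [this]
    push_cast [Nat.cast_sub (by omega : 1 ≤ m)]
    ring
  have e2 : (((2*m - 1 : ℕ) : ℝ) + 1) / 2 = (m : ℝ) := by
    push_cast [Nat.cast_sub (by omega : 1 ≤ 2*m)]
    ring
  have hGm : Real.Gamma ((m : ℝ)) = ((m-1).factorial : ℝ) := by
    have : (m : ℝ) = ((m-1 : ℕ) : ℝ) + 1 := by
      push_cast [Nat.cast_sub (by omega : 1 ≤ m)]; ring
    rw [this, Real.Gamma_nat_eq_factorial]
  have hGh : Real.Gamma (((m - 1 : ℕ) : ℝ) + 1/2) =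
      (Nat.doubleFactorial (2*m - 3) : ℝ) * Real.sqrt π / 2 ^ (m-1) := by
    rw [gamma_half (m-1)]
    have : 2*(m-1) - 1 = 2*m - 3 := by omega
    rw [this]
  -- rpow values
  have p1 : π ^ ((((2*m - 2 : ℕ) : ℝ) + 1) / 2) = π ^ m / Real.sqrt π := by
    rw [e1]
    have : ((m - 1 : ℕ) : ℝ) + 1/2 = (m : ℝ) - 1/2 := by
      push_cast [Nat.cast_sub (by omega : 1 ≤ m)]; ring
    rw [this, Real.rpow_sub hπ, Real.rpow_natCast, ← Real.sqrt_eq_rpow]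
  have p2 : π ^ ((((2*m - 1 : ℕ) : ℝ) + 1) / 2) = π ^ m := by
    rw [e2, Real.rpow_natCast]
  have hd2 : (Nat.doubleFactorial (2*m - 2) : ℝ) = 2 ^ (m-1) * ((m-1).factorial : ℝ) := by
    have : (2*m - 2 : ℕ) = 2*(m-1) := by omega
    rw [this, Nat.doubleFactorial_two_mul]
    push_cast; ring
  rw [sphereArea, sphereArea, p1, p2, e1, e2, hGm, hGh, hd2]
  have hfac : (0:ℝ) < ((m-1).factorial : ℝ) := by positivity
  have hdf : (0:ℝ) < (Nat.doubleFactorial (2*m - 3) : ℝ) := by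
    exact_mod_cast Nat.cast_pos.mpr (Nat.doubleFactorial_pos _)
  have hpm : (0:ℝ) < π ^ m := by positivity
  field_simp
  ring_nf
  rw [Real.sq_sqrt hπ.le]

lemma integral_sin_pow_lower (n : ℕ) {α : ℝ} (h0 : 0 ≤ α) (h : α ≤ π/2) :
    Real.cos α * Real.sin α ^ (n+1) / (n+1) ≤ ∫ θ in (0:ℝ)..α, Real.sin θ ^ n := by
  have key : (∫ x in (0:ℝ)..α,
      (-Real.sin x * Real.sin x ^ (n+1) + Real.cos x * (((n:ℝ)+1) * Real.sin x ^ n * Real.cos x)))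
      = Real.cos α * Real.sin α ^ (n+1) - Real.cos 0 * Real.sin 0 ^ (n+1) := by
    apply intervalIntegral.integral_eq_sub_of_hasDerivAt
    · intro x _
      have := (Real.hasDerivAt_cos x).fun_mul ((Real.hasDerivAt_sin x).fun_pow (n+1))
      refine this.congr_deriv ?_
      push_cast
      ring_nf
    · apply Continuous.intervalIntegrable
      continuity
  have hle : (∫ x in (0:ℝ)..α,
      (-Real.sin x * Real.sin x ^ (n+1) + Real.cos x * (((n:ℝ)+1) * Real.sin x ^ n * Real.cos x)))
      ≤ ∫ x in (0:ℝ)..α, ((n:ℝ)+1) * Real.sin x ^ n := by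
    apply intervalIntegral.integral_mono_on h0
    · apply Continuous.intervalIntegrable; continuity
    · apply Continuous.intervalIntegrable; continuity
    · intro x hx
      have hsx : 0 ≤ Real.sin x := Real.sin_nonneg_of_nonneg_of_le_pi hx.1
        (le_trans hx.2 (by linarith [Real.pi_pos]))
      have hcx : Real.cos x ^ 2 ≤ 1 := by
        nlinarith [Real.neg_one_le_cos x, Real.cos_le_one x]
      have hsp : (0:ℝ) ≤ Real.sin x ^ n := by positivity
      nlinarith [mul_nonneg (mul_nonneg (by positivity : (0:ℝ) ≤ (n:ℝ)+1) hsp)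
        (sub_nonneg.mpr hcx), mul_nonneg hsx (pow_nonneg hsx (n+1))]
  rw [intervalIntegral.integral_const_mul] at hle
  rw [key] at hle
  simp at hle
  rw [div_le_iff₀ (by positivity)]
  linarith [hle]

theorem capProb_lower_bound_even (N : ℕ) (hN : 4 ≤ N) (hEven : Even N)
    (α : ℝ) (hα : α ∈ Set.Ioo 0 (Real.pi / 2)) :
    capProb N α ≥
      ((Nat.doubleFactorial (N - 2) : ℝ) /
          (Real.pi * N * (Nat.doubleFactorial (N - 3) : ℝ))) *
        Real.cos α * Real.sin α ^ N := by
  obtain ⟨m, hm⟩ := hEven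
  have hN2 : N = 2 * m := by omega
  have hm2 : 2 ≤ m := by omega
  obtain ⟨hα0, hαπ⟩ := hα
  have hπ := Real.pi_pos
  have hcos : 0 < Real.cos α := Real.cos_pos_of_mem_Ioo ⟨by linarith, hαπ⟩
  have hsin : 0 < Real.sin α := Real.sin_pos_of_pos_of_lt_pi hα0 (by linarith)
  -- step 1: integral comparison sin^(N-2) ≥ sin^(N-1)
  have hmono : (∫ θ in (0:ℝ)..α, Real.sin θ ^ (N-2)) ≥ ∫ θ in (0:ℝ)..α, Real.sin θ ^ (N-1) := by
    apply intervalIntegral.integral_mono_on hα0.le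
    · apply Continuous.intervalIntegrable; continuity
    · apply Continuous.intervalIntegrable; continuity
    · intro x hx
      have hsx : 0 ≤ Real.sin x := Real.sin_nonneg_of_nonneg_of_le_pi hx.1 (by
        have := hx.2; linarith)
      exact pow_le_pow_of_le_one hsx (Real.sin_le_one x) (by omega)
  -- step 2: lower bound on ∫ sin^(N-1)
  have hlow : Real.cos α * Real.sin α ^ N / N ≤ ∫ θ in (0:ℝ)..α, Real.sin θ ^ (N-1) := by
    have h := integral_sin_pow_lower (N-1) hα0.le hαπ.le
    have e : N - 1 + 1 = N := by omega
    rw [e] at h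
    have e2 : ((N-1:ℕ):ℝ) + 1 = (N:ℝ) := by
      push_cast [Nat.cast_sub (by omega : 1 ≤ N)]; ring
    rw [e2] at h
    exact h
  -- combine
  have hC : sphereArea (N-2) / sphereArea (N-1) =
      (Nat.doubleFactorial (N-2) : ℝ) / (π * (Nat.doubleFactorial (N-3))) := by
    rw [hN2]; exact ratio_eq m hm2
  have hCpos : (0:ℝ) < (Nat.doubleFactorial (N-2) : ℝ) / (π * (Nat.doubleFactorial (N-3))) := by
    have h1 : (0:ℝ) < (Nat.doubleFactorial (N-2) : ℝ) := by
      exact_mod_cast Nat.doubleFactorial_pos _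
    have h2 : (0:ℝ) < (Nat.doubleFactorial (N-3) : ℝ) := by
      exact_mod_cast Nat.doubleFactorial_pos _
    positivity
  rw [capProb, hC]
  have hchain : (Nat.doubleFactorial (N-2) : ℝ) / (π * (Nat.doubleFactorial (N-3))) *
      (∫ θ in (0:ℝ)..α, Real.sin θ ^ (N-2)) ≥
      (Nat.doubleFactorial (N-2) : ℝ) / (π * (Nat.doubleFactorial (N-3))) *
      (Real.cos α * Real.sin α ^ N / N) := by
    apply mul_le_mul_of_nonneg_left _ hCpos.le
    linarith [hmono, hlow]
  refine le_trans (le_of_eq ?_) hchain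
  have hNpos : (0:ℝ) < (N:ℝ) := by positivity
  field_simp
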